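/- Every closed set of an algebraic closure system lies on some maximal chain of the lattice of closed sets, and for an algebraic convex geometry, the union of the families Id(X, ≤_C), taken over compatible total orders ≤_C arising from all maximal chains C, equals the full family of closed sets. -/

import Mathlib

/-- φ is a closure operator: extensive, monotone, idempotent. -/
def IsClosureOp {X : Type*} (φ : Set X → Set X) : Prop :=
  (∀ A, A ⊆ φ A) ∧ (∀ A B, A ⊆ B → φ A ⊆ φ B) ∧ (∀ A, φ (φ A) = φ A)

/-- φ is algebraic (finitary): the closure of a set is the union of closures of its
finite subsets. -/
def IsAlgebraicOp {X : Type*} (φ : Set X → Set X) : Prop :=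
  ∀ A, φ A = ⋃₀ {T | ∃ B, B ⊆ A ∧ B.Finite ∧ T = φ B}

/-- The anti-exchange property. -/
def AntiExchange {X : Type*} (φ : Set X → Set X) : Prop :=
  ∀ (x y : X) (A : Set X), x ≠ y → φ A = A → x ∉ A →
    x ∈ φ (A ∪ {y}) → y ∉ φ (A ∪ {x})

/-- A convex geometry: a zero-closure operator with the anti-exchange property. -/
def IsConvexGeometry {X : Type*} (φ : Set X → Set X) : Prop :=
  IsClosureOp φ ∧ φ ∅ = ∅ ∧ AntiExchange φ

/-- An algebraic convex geometry. -/
def IsAlgConvexGeometry {X : Type*} (φ : Set X → Set X) : Prop :=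
  IsClosureOp φ ∧ IsAlgebraicOp φ ∧ φ ∅ = ∅ ∧ AntiExchange φ

/-- An algebraic subset of Pow X : closed under arbitrary intersections
(with ⋂₀ ∅ = X) and under unions of nonempty up-directed subfamilies. -/
def IsAlgSubset {X : Type*} (F : Set (Set X)) : Prop :=
  (∀ S ⊆ F, ⋂₀ S ∈ F) ∧
  (∀ S ⊆ F, S.Nonempty → (∀ A ∈ S, ∀ B ∈ S, ∃ C ∈ S, A ∪ B ⊆ C) → ⋃₀ S ∈ F)

/-- A maximal chain in the lattice of φ-closed sets. -/
def IsMaxChainOfClosed {X : Type*} (φ : Set X → Set X) (C : Set (Set X)) : Prop :=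
  C ⊆ {Y | φ Y = Y} ∧ IsChain (· ⊆ ·) C ∧
  ∀ T, φ T = T → (∀ A ∈ C, T ⊆ A ∨ A ⊆ T) → T ∈ C

/-- Every closed set of an algebraic closure system lies on some maximal chain of
closed sets; and for an algebraic convex geometry, the union of the down-set
families Id(X, ≤_C) over all maximal chains C is the whole family of closed sets. -/
theorem stmt17 {X : Type*} (φ : Set X → Set X)
    (hclo : IsClosureOp φ) (halg : IsAlgebraicOp φ) :
    (∀ Y : Set X, φ Y = Y → ∃ C : Set (Set X), IsMaxChainOfClosed φ C ∧ Y ∈ C) ∧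
      (φ ∅ = ∅ → AntiExchange φ →
        {Y | φ Y = Y} =
          ⋃₀ {D : Set (Set X) | ∃ C : Set (Set X), IsMaxChainOfClosed φ C ∧
            D = {A : Set X | ∀ x y : X,
              (⋂₀ {C' | C' ∈ C ∧ x ∈ C'}) ⊆ (⋂₀ {C' | C' ∈ C ∧ y ∈ C'}) →
              y ∈ A → x ∈ A}}) := by
  obtain ⟨hext, hmono, hidem⟩ := hclo
  have hsInter : ∀ S : Set (Set X), (∀ A ∈ S, φ A = A) → φ (⋂₀ S) = ⋂₀ S := by
    intro S hS
    refine Set.Subset.antisymm ?_ (hext _)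
    intro z hz
    rw [Set.mem_sInter]
    intro A hA
    have h1 := hmono (⋂₀ S) A (Set.sInter_subset_of_mem hA)
    rw [hS A hA] at h1
    exact h1 hz
  have part1 : ∀ Y : Set X, φ Y = Y → ∃ C, IsMaxChainOfClosed φ C ∧ Y ∈ C := by
    intro Y hY
    set r : {A : Set X // φ A = A} → {A : Set X // φ A = A} → Prop :=
      fun a b => a.1 ⊆ b.1 with hr
    have hchain : IsChain r {(⟨Y, hY⟩ : {A : Set X // φ A = A})} :=
      Set.subsingleton_singleton.isChain
    obtain ⟨t, htmax, hts⟩ := hchain.exists_maxChain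
    refine ⟨Subtype.val '' t, ⟨?_, ?_, ?_⟩, ⟨⟨Y, hY⟩, hts rfl, rfl⟩⟩
    · rintro _ ⟨a, _, rfl⟩; exact a.2
    · rintro _ ⟨a, ha, rfl⟩ _ ⟨b, hb, rfl⟩ hne
      exact htmax.1 ha hb (fun h => hne (by rw [h]))
    · intro T hT hcomp
      have hmem : (⟨T, hT⟩ : {A : Set X // φ A = A}) ∈ t := by
        have hch : IsChain r (insert ⟨T, hT⟩ t) := by
          refine htmax.1.insert ?_
          intro b hb _
          exact hcomp b.1 ⟨b, hb, rfl⟩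
        have heq := htmax.2 hch (Set.subset_insert _ _)
        rw [heq]
        exact Set.mem_insert _ _
      exact ⟨_, hmem, rfl⟩
  refine ⟨part1, fun hempty _ => ?_⟩
  -- key facts about maximal chains
  have hP : ∀ C : Set (Set X), IsMaxChainOfClosed φ C → ∀ x : X,
      (⋂₀ {C' | C' ∈ C ∧ x ∈ C'}) ∈ C := by
    intro C hC x
    obtain ⟨hCcl, hCch, hCmax⟩ := hC
    refine hCmax _ (hsInter _ (fun A hA => hCcl hA.1)) ?_
    intro A hA
    by_cases hx : x ∈ A
    · exact Or.inl (Set.sInter_subset_of_mem ⟨hA, hx⟩)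
    · refine Or.inr (Set.subset_sInter ?_)
      rintro C' ⟨hC'C, hxC'⟩
      rcases hCch.total hA hC'C with h | h
      · exact h
      · exact absurd (h hxC') hx
  have hPx : ∀ C : Set (Set X), ∀ x : X, x ∈ (⋂₀ {C' | C' ∈ C ∧ x ∈ C'}) := by
    intro C x
    rw [Set.mem_sInter]
    exact fun t ht => ht.2
  ext Y
  simp only [Set.mem_setOf_eq, Set.mem_sUnion]
  constructor
  · intro hY
    obtain ⟨C, hC, hYC⟩ := part1 Y hY
    refine ⟨_, ⟨C, hC, rfl⟩, ?_⟩
    intro x y hxy hyY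
    exact (hxy.trans (Set.sInter_subset_of_mem ⟨hYC, hyY⟩)) (hPx C x)
  · rintro ⟨D, ⟨C, hC, rfl⟩, hYD⟩
    simp only [Set.mem_setOf_eq] at hYD
    refine Set.Subset.antisymm ?_ (hext Y)
    intro z hz
    rw [halg Y] at hz
    obtain ⟨_, ⟨B, hBY, hBfin, rfl⟩, hzB⟩ := hz
    rcases B.eq_empty_or_nonempty with hBe | hBne
    · rw [hBe, hempty] at hzB
      exact absurd hzB (Set.notMem_empty z)
    · obtain ⟨b₀, hb₀B, hb₀max⟩ := Set.Finite.exists_maximalFor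
        (fun b => ⋂₀ {C' | C' ∈ C ∧ b ∈ C'}) B hBfin hBne
      have hgreatest : ∀ b ∈ B,
          (⋂₀ {C' | C' ∈ C ∧ b ∈ C'}) ⊆ (⋂₀ {C' | C' ∈ C ∧ b₀ ∈ C'}) := by
        intro b hb
        rcases hC.2.1.total (hP C hC b) (hP C hC b₀) with h | h
        · exact h
        · exact hb₀max hb h
      have hBsub : B ⊆ ⋂₀ {C' | C' ∈ C ∧ b₀ ∈ C'} :=
        fun b hb => hgreatest b hb (hPx C b)
      have hzP : z ∈ ⋂₀ {C' | C' ∈ C ∧ b₀ ∈ C'} := by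
        have h1 := hmono B _ hBsub
        rw [hC.1 (hP C hC b₀)] at h1
        exact h1 hzB
      exact hYD z b₀ (Set.sInter_subset_of_mem ⟨hP C hC b₀, hzP⟩) (hBY hb₀B)
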